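/- Let X be a nonnegative random variable with cumulative distribution function F and finite mean E[X] = ∫₀^∞ (1 − F(x)) dx. Then the cumulative entropy of X satisfies 𝓒𝓔(X) = E[X] − Σ_{n=1}^∞ μ_{1:n+1}/(n(n+1)); equivalently 𝓒𝓔(X) + Σ_{n=1}^∞ μ_{1:n+1}/(n(n+1)) = E[X], where all terms are nonnegative. -/

import Mathlib

open MeasureTheory ProbabilityTheory Set
open scoped ENNReal

private lemma hasSum_aux {u : ℝ} (h0 : 0 ≤ u) (h1 : u ≤ 1) :
    HasSum (fun n : ℕ => u ^ (n + 2) / ((n + 1) * (n + 2)))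
      (u + (1 - u) * Real.log (1 - u)) := by
  rcases eq_or_lt_of_le h1 with rfl | hlt
  · simp only [one_pow, sub_self, zero_mul, add_zero]
    have key : ∀ n : ℕ, (1 : ℝ) / (n + 1) - 1 / (n + 2) = 1 / ((n + 1) * (n + 2)) := by
      intro n
      have h1 : (n : ℝ) + 1 ≠ 0 := by positivity
      have h2 : (n : ℝ) + 2 ≠ 0 := by positivity
      field_simp
      ring
    have hps : ∀ N : ℕ, ∑ n ∈ Finset.range N, (1 : ℝ) / ((n + 1) * (n + 2))
        = 1 - 1 / (N + 1) := by
      intro N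
      have := Finset.sum_range_sub' (f := fun n : ℕ => (1 : ℝ) / (n + 1)) N
      calc ∑ n ∈ Finset.range N, (1 : ℝ) / ((n + 1) * (n + 2))
          = ∑ n ∈ Finset.range N, ((1 : ℝ) / (n + 1) - 1 / (n + 2)) := by
            refine Finset.sum_congr rfl fun n _ => ?_
            rw [key]
        _ = 1 / ((0 : ℕ) + 1) - 1 / (N + 1) := by
            rw [← this]
            refine Finset.sum_congr rfl fun n _ => ?_
            push_cast
            ring_nf
        _ = 1 - 1 / (N + 1) := by norm_num
    rw [hasSum_iff_tendsto_nat_of_nonneg (fun n => by positivity)]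
    simp only [hps]
    have : Filter.Tendsto (fun N : ℕ => 1 - 1 / ((N : ℝ) + 1)) Filter.atTop (nhds (1 - 0)) := by
      exact Filter.Tendsto.const_sub _ tendsto_one_div_add_atTop_nhds_zero_nat
    simpa using this
  · have habs : |u| < 1 := abs_lt.2 ⟨by linarith, hlt⟩
    have L := Real.hasSum_pow_div_log_of_abs_lt_one habs
    have L1 : HasSum (fun n : ℕ => u ^ (n + 2) / (n + 1)) (u * -Real.log (1 - u)) := by
      have := L.mul_left u
      refine this.congr_fun fun n => ?_
      rw [mul_div_assoc']
      ring_nf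
    have L2 : HasSum (fun n : ℕ => u ^ (n + 2) / (n + 2)) (-Real.log (1 - u) - u) := by
      have h := (hasSum_nat_add_iff' (f := fun n : ℕ => u ^ (n + 1) / ((n : ℝ) + 1)) 1).2 L
      simp only [Finset.range_one, Finset.sum_singleton, Nat.cast_zero, pow_one, Nat.cast_add,
        Nat.cast_one, zero_add, div_one] at h
      have heq : (fun n : ℕ => u ^ (n + 1 + 1) / ((n : ℝ) + 1 + 1))
          = fun n : ℕ => u ^ (n + 2) / ((n : ℝ) + 2) := by
        funext n; ring_nf
      rw [heq] at h
      exact h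
    have hsum := L1.sub L2
    have heq : (fun n : ℕ => u ^ (n + 2) / ((n : ℝ) + 1) - u ^ (n + 2) / ((n : ℝ) + 2))
        = fun n : ℕ => u ^ (n + 2) / (((n : ℝ) + 1) * ((n : ℝ) + 2)) := by
      funext n
      have h1 : (n : ℝ) + 1 ≠ 0 := by positivity
      have h2 : (n : ℝ) + 2 ≠ 0 := by positivity
      field_simp
      ring
    rw [heq] at hsum
    rw [show u + (1 - u) * Real.log (1 - u) = u * -Real.log (1 - u) - (-Real.log (1 - u) - u) by ring]
    exact hsum

private lemma key_pointwise {F : ℝ} (h0 : 0 ≤ F) (h1 : F ≤ 1) :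
    ENNReal.ofReal (-(F * Real.log F))
      + ∑' n : ℕ, ENNReal.ofReal ((1 - F) ^ (n + 2))
          / (((n : ℝ≥0∞) + 1) * ((n : ℝ≥0∞) + 2))
    = ENNReal.ofReal (1 - F) := by
  set u : ℝ := 1 - F with hu
  have hu0 : 0 ≤ u := by simp [hu]; linarith
  have hu1 : u ≤ 1 := by simp [hu]; linarith
  have hS := hasSum_aux hu0 hu1
  have hterm : ∀ n : ℕ,
      ENNReal.ofReal (u ^ (n + 2)) / (((n : ℝ≥0∞) + 1) * ((n : ℝ≥0∞) + 2))
        = ENNReal.ofReal (u ^ (n + 2) / (((n : ℝ) + 1) * ((n : ℝ) + 2))) := by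
    intro n
    rw [ENNReal.ofReal_div_of_pos (by positivity)]
    congr 1
    rw [ENNReal.ofReal_mul (by positivity)]
    congr 1
    · rw [ENNReal.ofReal_add (by positivity) zero_le_one]
      simp
    · rw [show ((n : ℝ) + 2) = (n : ℝ) + 1 + 1 by ring,
        ENNReal.ofReal_add (by positivity) zero_le_one,
        ENNReal.ofReal_add (by positivity) zero_le_one]
      simp
      ring
  have hsum : ∑' n : ℕ, ENNReal.ofReal (u ^ (n + 2))
        / (((n : ℝ≥0∞) + 1) * ((n : ℝ≥0∞) + 2))
      = ENNReal.ofReal (u + (1 - u) * Real.log (1 - u)) := by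
    rw [tsum_congr hterm, ← ENNReal.ofReal_tsum_of_nonneg
      (fun n => by positivity) hS.summable, hS.tsum_eq]
  rw [hsum]
  have hF : (1 : ℝ) - u = F := by rw [hu]; ring
  rw [hF]
  have hnn : 0 ≤ u + F * Real.log F := by
    have := hS.nonneg fun n => by positivity
    rwa [hF] at this
  rw [← ENNReal.ofReal_add (by nlinarith [Real.log_nonpos h0 h1]) hnn]
  congr 1
  ring

theorem ce_add_tsum_min_order_stats_eq_mean
    (μ : Measure ℝ) [IsProbabilityMeasure μ] (hnonneg : μ (Set.Iio 0) = 0)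
    (hmean : ∫⁻ x in Set.Ioi (0 : ℝ), ENNReal.ofReal (1 - cdf μ x) ≠ ⊤) :
    (∫⁻ x in Set.Ioi (0 : ℝ),
        ENNReal.ofReal (-(cdf μ x * Real.log (cdf μ x))))
      + ∑' n : ℕ,
          (∫⁻ x in Set.Ioi (0 : ℝ), ENNReal.ofReal ((1 - cdf μ x) ^ (n + 2)))
            / (((n : ℝ≥0∞) + 1) * ((n : ℝ≥0∞) + 2))
    = ∫⁻ x in Set.Ioi (0 : ℝ), ENNReal.ofReal (1 - cdf μ x) := by
  have hmeas : Measurable (cdf μ) := (cdf μ).mono.measurable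
  set c : ℕ → ℝ≥0∞ := fun n => ((n : ℝ≥0∞) + 1) * ((n : ℝ≥0∞) + 2) with hc
  have hcinv : ∀ n : ℕ, (c n)⁻¹ ≠ ⊤ := by
    intro n
    simp only [hc, ne_eq, ENNReal.inv_eq_top, mul_eq_zero]
    push_neg
    constructor <;> simp [add_eq_zero]
  have hdiv : ∀ n : ℕ,
      (∫⁻ x in Set.Ioi (0 : ℝ), ENNReal.ofReal ((1 - cdf μ x) ^ (n + 2))) / c n
        = ∫⁻ x in Set.Ioi (0 : ℝ),
            ENNReal.ofReal ((1 - cdf μ x) ^ (n + 2)) * (c n)⁻¹ := by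
    intro n
    rw [div_eq_mul_inv, ← lintegral_mul_const' _ _ (hcinv n)]
  have hmf : ∀ n : ℕ, Measurable fun x : ℝ =>
      ENNReal.ofReal ((1 - cdf μ x) ^ (n + 2)) * (c n)⁻¹ :=
    fun n => (((measurable_const.sub hmeas).pow_const _).ennreal_ofReal).mul_const _
  have hml : Measurable fun x : ℝ =>
      ENNReal.ofReal (-(cdf μ x * Real.log (cdf μ x))) :=
    ((hmeas.mul (Real.measurable_log.comp hmeas)).neg).ennreal_ofReal
  calc (∫⁻ x in Set.Ioi (0 : ℝ), ENNReal.ofReal (-(cdf μ x * Real.log (cdf μ x))))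
        + ∑' n : ℕ,
            (∫⁻ x in Set.Ioi (0 : ℝ), ENNReal.ofReal ((1 - cdf μ x) ^ (n + 2))) / c n
      = (∫⁻ x in Set.Ioi (0 : ℝ), ENNReal.ofReal (-(cdf μ x * Real.log (cdf μ x))))
        + ∫⁻ x in Set.Ioi (0 : ℝ), ∑' n : ℕ,
            ENNReal.ofReal ((1 - cdf μ x) ^ (n + 2)) * (c n)⁻¹ := by
        rw [tsum_congr hdiv, ← lintegral_tsum fun n => (hmf n).aemeasurable]
    _ = ∫⁻ x in Set.Ioi (0 : ℝ),
          (ENNReal.ofReal (-(cdf μ x * Real.log (cdf μ x)))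
            + ∑' n : ℕ, ENNReal.ofReal ((1 - cdf μ x) ^ (n + 2)) * (c n)⁻¹) := by
        rw [← lintegral_add_left hml]
    _ = ∫⁻ x in Set.Ioi (0 : ℝ), ENNReal.ofReal (1 - cdf μ x) := by
        refine lintegral_congr fun x => ?_
        have := key_pointwise (cdf_nonneg μ x) (cdf_le_one μ x)
        simpa only [div_eq_mul_inv] using this
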